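/- Let p > 1, let a, b : (0,∞) → (0,∞) be C¹ weights, χ(r) = ∫₀ʳ (b/a)^{1/p} dt a diffeomorphism of (0,∞), and q := (a∘χ^{-1})^{1/p}·(b∘χ^{-1})^{1/p'}. If u ∈ C¹ solves (a(r)·φ_p(u'(r)))' + b(r)·f(u(r)) = 0 on (0,∞), then v := u∘χ^{-1} solves (q(t)·φ_p(v'(t)))' + q(t)·f(v(t)) = 0 on (0,∞), where φ_p(s) = |s|^{p−2}s and 1/p + 1/p' = 1. -/

import Mathlib

open Set Filter

/-- `B * (A/B)^(1/p) = A^(1/p) * B^(1/p')` for positive `A, B`. -/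
lemma stmt15_aux1 (p p' : ℝ) (hp : 1 < p) (hp' : 1 / p + 1 / p' = 1)
    (A B : ℝ) (hA : 0 < A) (hB : 0 < B) :
    B * (A / B) ^ (1 / p) = A ^ (1 / p) * B ^ (1 / p') := by
  have h1 : 1 / p' = 1 - 1 / p := by linarith
  calc B * (A / B) ^ (1 / p) = B * (A ^ (1 / p) / B ^ (1 / p)) := by
        rw [Real.div_rpow hA.le hB.le]
    _ = A ^ (1 / p) * (B / B ^ (1 / p)) := by ring
    _ = A ^ (1 / p) * B ^ (1 / p') := by
        rw [h1, Real.rpow_sub hB, Real.rpow_one]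

/-- The key algebraic identity. -/
lemma stmt15_aux2 (p p' : ℝ) (hp : 1 < p) (hp' : 1 / p + 1 / p' = 1)
    (A B s : ℝ) (hA : 0 < A) (hB : 0 < B) :
    (A ^ (1 / p) * B ^ (1 / p')) *
      (|s * (A / B) ^ (1 / p)| ^ (p - 2) * (s * (A / B) ^ (1 / p)))
      = A * (|s| ^ (p - 2) * s) := by
  have hpne : p ≠ 0 := by positivity
  have h1 : 1 / p' = 1 - 1 / p := by linarith
  set c : ℝ := (A / B) ^ (1 / p) with hc_def
  have hc : 0 < c := Real.rpow_pos_of_pos (div_pos hA hB) _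
  have habs : |s * c| = |s| * c := by rw [abs_mul, abs_of_pos hc]
  have hmul : (|s| * c) ^ (p - 2) = |s| ^ (p - 2) * c ^ (p - 2) :=
    Real.mul_rpow (abs_nonneg s) hc.le
  have hcp1 : c ^ (p - 2) * c = c ^ (p - 1) := by
    have h := Real.rpow_add_one hc.ne' (p - 2)
    rw [show p - 2 + 1 = p - 1 by ring] at h
    rw [h]
  have hexp : (1 / p) * (p - 1) = 1 / p' := by
    rw [h1]; field_simp
  have hcp : c ^ (p - 1) = A ^ (1 / p') / B ^ (1 / p') := by
    rw [hc_def, ← Real.rpow_mul (div_pos hA hB).le, hexp,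
      Real.div_rpow hA.le hB.le]
  have hBp' : (B : ℝ) ^ (1 / p') ≠ 0 := (Real.rpow_pos_of_pos hB _).ne'
  have hAA : A ^ (1 / p) * A ^ (1 / p') = A := by
    rw [← Real.rpow_add hA, hp', Real.rpow_one]
  have hqc : (A ^ (1 / p) * B ^ (1 / p')) * (A ^ (1 / p') / B ^ (1 / p')) = A := by
    field_simp
    exact hAA
  calc (A ^ (1 / p) * B ^ (1 / p')) * (|s * c| ^ (p - 2) * (s * c))
      = (A ^ (1 / p) * B ^ (1 / p')) * ((|s| ^ (p - 2) * c ^ (p - 2)) * (s * c)) := by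
        rw [habs, hmul]
    _ = ((A ^ (1 / p) * B ^ (1 / p')) * (c ^ (p - 2) * c)) * (|s| ^ (p - 2) * s) := by
        ring
    _ = A * (|s| ^ (p - 2) * s) := by
        rw [hcp1, hcp, hqc]

theorem stmt15 (p p' : ℝ) (hp : 1 < p) (hp' : 1 / p + 1 / p' = 1)
    (a b : ℝ → ℝ) (hapos : ∀ r > (0:ℝ), 0 < a r) (hbpos : ∀ r > (0:ℝ), 0 < b r)
    (f : ℝ → ℝ) (hf : Continuous f)
    (χ ψ : ℝ → ℝ)
    (hχψ : ∀ t > (0:ℝ), 0 < ψ t ∧ χ (ψ t) = t)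
    (hψχ : ∀ r > (0:ℝ), ψ (χ r) = r ∧ 0 < χ r)
    (hχ' : ∀ r > (0:ℝ), HasDerivAt χ ((b r / a r) ^ (1 / p)) r)
    (q : ℝ → ℝ) (hq : ∀ t > (0:ℝ), q t = (a (ψ t)) ^ (1 / p) * (b (ψ t)) ^ (1 / p'))
    (u u' : ℝ → ℝ) (hu : ∀ r > (0:ℝ), HasDerivAt u (u' r) r)
    (hueq : ∀ r > (0:ℝ),
      HasDerivAt (fun r => a r * (|u' r| ^ (p - 2) * u' r)) (-(b r * f (u r))) r)
    (v : ℝ → ℝ) (hv : ∀ t, v t = u (ψ t)) :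
    ∀ t > (0:ℝ),
      HasDerivAt (fun t => q t * (|deriv v t| ^ (p - 2) * deriv v t))
        (-(q t * f (v t))) t := by
  -- χ is strictly monotone on (0, ∞)
  have hχcont : ContinuousOn χ (Ioi (0:ℝ)) := fun x hx =>
    ((hχ' x hx).continuousAt).continuousWithinAt
  have hχmono : StrictMonoOn χ (Ioi (0:ℝ)) := by
    apply strictMonoOn_of_deriv_pos (convex_Ioi 0) hχcont
    intro x hx
    rw [interior_Ioi] at hx
    rw [(hχ' x hx).deriv]
    exact Real.rpow_pos_of_pos (div_pos (hbpos x hx) (hapos x hx)) _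
  -- ψ is strictly monotone on (0, ∞)
  have hψmono : StrictMonoOn ψ (Ioi (0:ℝ)) := by
    intro t₁ h₁ t₂ h₂ hlt
    by_contra h
    push_neg at h
    have := hχmono.monotoneOn (hχψ t₂ h₂).1 (hχψ t₁ h₁).1 h
    rw [(hχψ t₁ h₁).2, (hχψ t₂ h₂).2] at this
    exact absurd this (not_le.mpr hlt)
  -- ψ is continuous on (0, ∞)
  have hψcont : ∀ x > (0:ℝ), ContinuousAt ψ x := by
    intro x hx
    apply hψmono.continuousAt_of_image_mem_nhds (s := Ioi (0:ℝ))
      (Ioi_mem_nhds hx)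
    refine mem_of_superset (Ioi_mem_nhds (hχψ x hx).1) ?_
    intro r hr
    exact ⟨χ r, (hψχ r hr).2, (hψχ r hr).1⟩
  -- derivative of ψ
  have hψ' : ∀ x > (0:ℝ), HasDerivAt ψ ((a (ψ x) / b (ψ x)) ^ (1 / p)) x := by
    intro x hx
    obtain ⟨hψx, hχψx⟩ := hχψ x hx
    have hab : (0:ℝ) < b (ψ x) / a (ψ x) := div_pos (hbpos _ hψx) (hapos _ hψx)
    have h1 : HasDerivAt χ ((b (ψ x) / a (ψ x)) ^ (1 / p)) (ψ x) := hχ' _ hψx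
    have h2 : ((b (ψ x) / a (ψ x)) ^ (1 / p) : ℝ) ≠ 0 :=
      (Real.rpow_pos_of_pos hab _).ne'
    have h3 : ∀ᶠ y in nhds x, χ (ψ y) = y :=
      eventually_of_mem (Ioi_mem_nhds hx) (fun y hy => (hχψ y hy).2)
    have h4 := HasDerivAt.of_local_left_inverse (hψcont x hx) h1 h2 h3
    have h5 : ((b (ψ x) / a (ψ x)) ^ (1 / p) : ℝ)⁻¹ = (a (ψ x) / b (ψ x)) ^ (1 / p) := by
      rw [← Real.inv_rpow hab.le, inv_div]
    rwa [h5] at h4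
  -- derivative of v
  have hvfun : v = u ∘ ψ := funext hv
  have hv' : ∀ x > (0:ℝ), HasDerivAt v (u' (ψ x) * (a (ψ x) / b (ψ x)) ^ (1 / p)) x := by
    intro x hx
    rw [hvfun]
    exact (hu _ (hχψ x hx).1).comp x (hψ' x hx)
  have hdv : ∀ x > (0:ℝ), deriv v x = u' (ψ x) * (a (ψ x) / b (ψ x)) ^ (1 / p) :=
    fun x hx => (hv' x hx).deriv
  -- the key pointwise identity
  have key : ∀ x > (0:ℝ), q x * (|deriv v x| ^ (p - 2) * deriv v x)
      = a (ψ x) * (|u' (ψ x)| ^ (p - 2) * u' (ψ x)) := by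
    intro x hx
    rw [hdv x hx, hq x hx]
    exact stmt15_aux2 p p' hp hp' (a (ψ x)) (b (ψ x)) (u' (ψ x))
      (hapos _ (hχψ x hx).1) (hbpos _ (hχψ x hx).1)
  intro t ht
  obtain ⟨hψt, hχψt⟩ := hχψ t ht
  -- derivative of the composed function
  have hcomp : HasDerivAt (fun x => a (ψ x) * (|u' (ψ x)| ^ (p - 2) * u' (ψ x)))
      ((-(b (ψ t) * f (u (ψ t)))) * (a (ψ t) / b (ψ t)) ^ (1 / p)) t :=
    (hueq _ hψt).comp t (hψ' t ht)
  have heq : (fun x => q x * (|deriv v x| ^ (p - 2) * deriv v x))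
      =ᶠ[nhds t] (fun x => a (ψ x) * (|u' (ψ x)| ^ (p - 2) * u' (ψ x))) :=
    eventually_of_mem (Ioi_mem_nhds ht) (fun x hx => key x hx)
  have hval : (-(b (ψ t) * f (u (ψ t)))) * (a (ψ t) / b (ψ t)) ^ (1 / p)
      = -(q t * f (v t)) := by
    rw [hv t, hq t ht]
    have := stmt15_aux1 p p' hp hp' (a (ψ t)) (b (ψ t)) (hapos _ hψt) (hbpos _ hψt)
    rw [← this]
    ring
  rw [← hval]
  exact hcomp.congr_of_eventuallyEq heq
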